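/- Let L be a real Galois quartic extension of ℚ with Galois group isomorphic to the Klein four-group, with quadratic subfields ℚ(√d₁), ℚ(√d₂), ℚ(√d₃), and let u₁, u₂, u₃ > 1 be the fundamental units of these quadratic fields. Then u₁, u₂, u₃ are multiplicatively independent: if u₁^{m₁} u₂^{m₂} u₃^{m₃} = 1 for integers m₁, m₂, m₃, then m₁ = m₂ = m₃ = 0. -/

import Mathlib

open NumberField IntermediateField Module

lemma aux_irrat (d : ℤ) (K : IntermediateField ℚ ℝ)
    (hK : K = IntermediateField.adjoin ℚ {Real.sqrt d})
    (hq : Module.finrank ℚ K = 2) : ∀ q : ℚ, Real.sqrt d ≠ q := by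
  intro q hq'
  have hb : K = ⊥ := by
    rw [hK]
    refine le_antisymm ?_ bot_le
    rw [adjoin_le_iff]
    rintro x rfl
    rw [SetLike.mem_coe, IntermediateField.mem_bot]
    exact ⟨q, by simpa using hq'.symm⟩
  rw [hb, IntermediateField.finrank_bot] at hq
  omega

lemma aux_pos (d : ℤ) (hd : Squarefree d) (hirr : ∀ q : ℚ, Real.sqrt d ≠ q) :
    Real.sqrt d ^ 2 = (d:ℝ) ∧ 0 < Real.sqrt d := by
  have hd0 : (d:ℝ) ≠ 0 := by exact_mod_cast hd.ne_zero
  rcases le_or_gt (d:ℝ) 0 with h | h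
  · exact absurd (by simpa using Real.sqrt_eq_zero'.mpr h : Real.sqrt d = ((0:ℚ):ℝ)).symm
      (Ne.symm (hirr 0))
  · exact ⟨Real.sq_sqrt h.le, Real.sqrt_pos.mpr h⟩

lemma aux_nosq (d : ℤ) (hs : Real.sqrt d ^ 2 = (d:ℝ)) (hirr : ∀ q : ℚ, Real.sqrt d ≠ q) :
    ∀ q : ℚ, ((q:ℝ))^2 ≠ (d:ℝ) := by
  intro q hq
  have h1 : Real.sqrt d = |(q:ℝ)| := by
    nlinarith [Real.sqrt_nonneg (d:ℝ), abs_nonneg (q:ℝ), sq_abs (q:ℝ)]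
  exact hirr |q| (by rw [h1]; push_cast; ring)

lemma aux_alg (d : ℚ) (s : ℝ) (hs : s^2 = (d:ℝ)) : IsAlgebraic ℚ s := by
  refine ⟨Polynomial.X^2 - Polynomial.C d, Polynomial.X_pow_sub_C_ne_zero (by norm_num) d, ?_⟩
  simp [hs]

lemma aux_rep2 (d : ℚ) (s : ℝ) (hs : s^2 = (d:ℝ)) :
    ∀ x ∈ IntermediateField.adjoin ℚ {s}, ∃ a b : ℚ, x = a + b * s := by
  have halg : ∀ x ∈ ({s} : Set ℝ), IsAlgebraic ℚ x := by rintro x rfl; exact aux_alg d _ hs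
  intro x hx
  have hx' : x ∈ Algebra.adjoin ℚ ({s} : Set ℝ) := by
    rw [← adjoin_toSubalgebra_of_isAlgebraic halg]; exact hx
  clear hx
  induction hx' using Algebra.adjoin_induction with
  | mem x hx => rcases hx with rfl; exact ⟨0, 1, by simp⟩
  | algebraMap r => exact ⟨r, 0, by simp⟩
  | add x y hx hy ihx ihy =>
    obtain ⟨a, b, rfl⟩ := ihx; obtain ⟨c, e, rfl⟩ := ihy
    exact ⟨a + c, b + e, by push_cast; ring⟩
  | mul x y hx hy ihx ihy =>
    obtain ⟨a, b, rfl⟩ := ihx; obtain ⟨c, e, rfl⟩ := ihy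
    exact ⟨a*c + b*e*d, a*e + b*c, by push_cast; linear_combination ((b:ℝ)*e) * hs⟩

lemma aux_rep4 (d₁ d₂ : ℚ) (s₁ s₂ : ℝ) (hs₁ : s₁^2 = (d₁:ℝ)) (hs₂ : s₂^2 = (d₂:ℝ)) :
    ∀ x ∈ IntermediateField.adjoin ℚ {s₁, s₂},
      ∃ a b c e : ℚ, x = a + b * s₁ + c * s₂ + e * (s₁ * s₂) := by
  have halg : ∀ x ∈ ({s₁, s₂} : Set ℝ), IsAlgebraic ℚ x := by
    rintro x (rfl | rfl)
    exacts [aux_alg d₁ _ hs₁, aux_alg d₂ _ hs₂]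
  intro x hx
  have hx' : x ∈ Algebra.adjoin ℚ ({s₁, s₂} : Set ℝ) := by
    rw [← adjoin_toSubalgebra_of_isAlgebraic halg]; exact hx
  clear hx
  induction hx' using Algebra.adjoin_induction with
  | mem x hx =>
    rcases hx with rfl | rfl
    · exact ⟨0, 1, 0, 0, by simp⟩
    · exact ⟨0, 0, 1, 0, by simp⟩
  | algebraMap r => exact ⟨r, 0, 0, 0, by simp⟩
  | add x y hx hy ihx ihy =>
    obtain ⟨a, b, c, e, rfl⟩ := ihx; obtain ⟨a', b', c', e', rfl⟩ := ihy
    exact ⟨a + a', b + b', c + c', e + e', by push_cast; ring⟩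
  | mul x y hx hy ihx ihy =>
    obtain ⟨a, b, c, e, rfl⟩ := ihx; obtain ⟨a', b', c', e', rfl⟩ := ihy
    refine ⟨a*a' + b*b'*d₁ + c*c'*d₂ + e*e'*d₁*d₂,
      a*b' + b*a' + (c*e' + e*c')*d₂, a*c' + c*a' + (b*e' + e*b')*d₁,
      a*e' + e*a' + b*c' + c*b', ?_⟩
    push_cast
    linear_combination ((b:ℝ)*b' + ((b:ℝ)*e' + e*b')*s₂ + (e:ℝ)*e'*s₂^2) * hs₁
      + ((c:ℝ)*c' + ((c:ℝ)*e' + e*c')*s₁ + (e:ℝ)*e'*(d₁:ℝ)) * hs₂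

example (a : ℚ) (L : IntermediateField ℚ ℝ) : ((algebraMap ℚ L a : L) : ℝ) = (a:ℝ) := by
  norm_cast

lemma aux_notin (K K' : IntermediateField ℚ ℝ) (s s' : ℝ)
    (hK : K = IntermediateField.adjoin ℚ {s}) (hK' : K' = IntermediateField.adjoin ℚ {s'})
    (hq : Module.finrank ℚ K = 2) (hq' : Module.finrank ℚ K' = 2) (hne : K ≠ K') :
    ∀ p q : ℚ, s' ≠ p + q * s := by
  intro p q heq
  have hfin : FiniteDimensional ℚ K := FiniteDimensional.of_finrank_pos (by omega)
  have hsK : s ∈ K := hK ▸ mem_adjoin_simple_self ℚ s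
  have hs'K : s' ∈ K := by
    rw [heq]
    exact add_mem (IntermediateField.algebraMap_mem K p)
      (mul_mem (IntermediateField.algebraMap_mem K q) hsK)
  have hle : K' ≤ K := by
    rw [hK']
    exact adjoin_le_iff.mpr (Set.singleton_subset_iff.mpr hs'K)
  exact hne (eq_of_le_of_finrank_le hle (by omega)).symm

lemma aux_sup (L K₁ K₂ : IntermediateField ℚ ℝ) [FiniteDimensional ℚ L]
    (hdeg : Module.finrank ℚ L = 4) (h1 : K₁ ≤ L) (h2 : K₂ ≤ L) (h12 : K₁ ≠ K₂)
    (hq1 : Module.finrank ℚ K₁ = 2) (hq2 : Module.finrank ℚ K₂ = 2) : K₁ ⊔ K₂ = L := by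
  have f1 : FiniteDimensional ℚ K₁ := FiniteDimensional.of_finrank_pos (by omega)
  have f2 : FiniteDimensional ℚ K₂ := FiniteDimensional.of_finrank_pos (by omega)
  have hML : K₁ ⊔ K₂ ≤ L := sup_le h1 h2
  have hd1 : Module.finrank ℚ K₁ ∣ Module.finrank ℚ ↥(K₁ ⊔ K₂) :=
    ⟨_, (finrank_bot_mul_relfinrank (le_sup_left : K₁ ≤ K₁ ⊔ K₂)).symm⟩
  have hd2 : Module.finrank ℚ ↥(K₁ ⊔ K₂) ∣ Module.finrank ℚ L :=
    ⟨_, (finrank_bot_mul_relfinrank hML).symm⟩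
  rw [hq1] at hd1; rw [hdeg] at hd2
  have h24 : Module.finrank ℚ ↥(K₁ ⊔ K₂) = 2 ∨ Module.finrank ℚ ↥(K₁ ⊔ K₂) = 4 := by
    have h0 : 0 < Module.finrank ℚ ↥(K₁ ⊔ K₂) := Nat.pos_of_dvd_of_pos hd2 (by norm_num)
    have h4 : Module.finrank ℚ ↥(K₁ ⊔ K₂) ≤ 4 := Nat.le_of_dvd (by norm_num) hd2
    rcases hd1 with ⟨c, hc⟩
    omega
  rcases h24 with hm | hm
  · exfalso
    have e1 : K₁ = K₁ ⊔ K₂ := eq_of_le_of_finrank_le le_sup_left (by omega)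
    have e2 : K₂ = K₁ ⊔ K₂ := eq_of_le_of_finrank_le le_sup_right (by omega)
    exact h12 (e1.trans e2.symm)
  · exact eq_of_le_of_finrank_le hML (by omega)

lemma aux_mk_eq (L : IntermediateField ℚ ℝ) (s : ℝ) (hsL : s ∈ L)
    (x : ℝ) (hxL : x ∈ L) (a b : ℚ) (hx : x = a + b * s) :
    (⟨x, hxL⟩ : L) = algebraMap ℚ L a + algebraMap ℚ L b * ⟨s, hsL⟩ := by
  apply Subtype.ext
  push_cast
  exact hx

lemma aux_fix (L : IntermediateField ℚ ℝ) (s : ℝ) (hsL : s ∈ L)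
    (σ : L ≃ₐ[ℚ] L) (hσ : σ ⟨s, hsL⟩ = ⟨s, hsL⟩)
    (x : ℝ) (hxL : x ∈ L) (a b : ℚ) (hx : x = a + b * s) :
    σ ⟨x, hxL⟩ = ⟨x, hxL⟩ := by
  rw [aux_mk_eq L s hsL x hxL a b hx, map_add, map_mul, AlgEquiv.commutes, AlgEquiv.commutes, hσ]

lemma aux_negrep (L : IntermediateField ℚ ℝ) (s : ℝ) (hsL : s ∈ L)
    (σ : L ≃ₐ[ℚ] L) (hσ : σ ⟨s, hsL⟩ = -⟨s, hsL⟩)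
    (x : ℝ) (hxL : x ∈ L) (a b : ℚ) (hx : x = a + b * s) :
    σ ⟨x, hxL⟩ = algebraMap ℚ L a - algebraMap ℚ L b * ⟨s, hsL⟩ := by
  rw [aux_mk_eq L s hsL x hxL a b hx, map_add, map_mul, AlgEquiv.commutes, AlgEquiv.commutes, hσ]
  ring

lemma aux_linind (d₁ d₂ : ℤ) (s₁ s₂ : ℝ) (hs₁ : s₁^2 = (d₁:ℝ))
    (hirr₁ : ∀ q : ℚ, s₁ ≠ q)
    (hnosq₁ : ∀ q : ℚ, ((q:ℝ))^2 ≠ (d₁:ℝ))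
    (hnot : ∀ p q : ℚ, s₂ ≠ p + q * s₁) :
    ∀ a b c e : ℚ, (a:ℝ) + b*s₁ + c*s₂ + e*(s₁*s₂) = 0 → a = 0 ∧ b = 0 ∧ c = 0 ∧ e = 0 := by
  intro a b c e hrel
  have hce : (c:ℝ) + e*s₁ = 0 := by
    by_contra hne
    have hD : (c:ℝ)^2 - (e:ℝ)^2*(d₁:ℝ) ≠ 0 := by
      intro h0
      by_cases he : (e:ℝ) = 0
      · apply hne
        have h2 : (c:ℝ)^2 = 0 := by rw [he] at h0; linarith
        have hc' : (c:ℝ) = 0 := by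
          have := sq_eq_zero_iff.mp h2
          exact this
        rw [hc', he]; ring
      · exact hnosq₁ (c/e) (by push_cast; field_simp; linear_combination h0)
    have hDq : (c^2 - e^2*(d₁:ℚ)) ≠ 0 := by
      intro h0
      have h0' := congrArg (fun t : ℚ => (t:ℝ)) h0
      push_cast at h0'
      exact hD (by linarith)
    have key : s₂ * ((c:ℝ)^2 - (e:ℝ)^2*(d₁:ℝ)) =
        (-((a:ℝ)*c - (b:ℝ)*e*(d₁:ℝ))) + ((a:ℝ)*e - (b:ℝ)*c)*s₁ := by
      linear_combination ((c:ℝ) - (e:ℝ)*s₁) * hrel + ((b:ℝ)*(e:ℝ) + (e:ℝ)^2*s₂) * hs₁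
    apply hnot (-(a*c - b*e*(d₁:ℚ))/(c^2 - e^2*(d₁:ℚ))) ((a*e - b*c)/(c^2 - e^2*(d₁:ℚ)))
    push_cast
    field_simp
    linear_combination key
  have he0 : e = 0 := by
    by_contra he
    have he' : (e:ℝ) ≠ 0 := by exact_mod_cast he
    apply hirr₁ (-c/e)
    push_cast
    field_simp
    linear_combination hce
  have hc0 : c = 0 := by
    rw [he0] at hce; push_cast at hce; exact_mod_cast (by linarith : (c:ℝ) = 0)
  have hrel' : (a:ℝ) + b*s₁ = 0 := by
    rw [hc0, he0] at hrel; push_cast at hrel; linarith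
  have hb0 : b = 0 := by
    by_contra hb
    have hb' : (b:ℝ) ≠ 0 := by exact_mod_cast hb
    apply hirr₁ (-a/b)
    push_cast
    field_simp
    linear_combination hrel'
  have ha0 : a = 0 := by
    rw [hb0] at hrel'; push_cast at hrel'; exact_mod_cast (by linarith : (a:ℝ) = 0)
  exact ⟨ha0, hb0, hc0, he0⟩

lemma aux_s3 (d₁ d₂ d₃ : ℤ) (s₁ s₂ s₃ : ℝ)
    (hs₁ : s₁^2 = (d₁:ℝ)) (hs₂ : s₂^2 = (d₂:ℝ)) (hs₃ : s₃^2 = (d₃:ℝ))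
    (hirr₃ : ∀ q : ℚ, s₃ ≠ q)
    (hnosq₁ : ∀ q : ℚ, ((q:ℝ))^2 ≠ (d₁:ℝ))
    (hnosq₂ : ∀ q : ℚ, ((q:ℝ))^2 ≠ (d₂:ℝ))
    (hlin : ∀ a b c e : ℚ, (a:ℝ) + b*s₁ + c*s₂ + e*(s₁*s₂) = 0 → a = 0 ∧ b = 0 ∧ c = 0 ∧ e = 0)
    (hnot31 : ∀ p q : ℚ, s₃ ≠ p + q * s₁) (hnot32 : ∀ p q : ℚ, s₃ ≠ p + q * s₂)
    (a b c e : ℚ) (hrep : s₃ = a + b*s₁ + c*s₂ + e*(s₁*s₂)) :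
    a = 0 ∧ b = 0 ∧ c = 0 ∧ e ≠ 0 := by
  have hd1 : (d₁:ℚ) ≠ 0 := by
    intro h0
    apply hnosq₁ 0
    have h1 : (d₁:ℝ) = 0 := by exact_mod_cast h0
    rw [h1]; norm_num
  have hd2 : (d₂:ℚ) ≠ 0 := by
    intro h0
    apply hnosq₂ 0
    have h1 : (d₂:ℝ) = 0 := by exact_mod_cast h0
    rw [h1]; norm_num
  obtain ⟨hA, hB, hC, hE⟩ := hlin (a^2 + b^2*(d₁:ℚ) + c^2*(d₂:ℚ) + e^2*((d₁:ℚ)*(d₂:ℚ)) - (d₃:ℚ))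
      (2*(a*b + c*e*(d₂:ℚ))) (2*(a*c + b*e*(d₁:ℚ))) (2*(a*e + b*c)) (by
    push_cast
    linear_combination (-(((a:ℝ) + b*s₁ + c*s₂ + e*(s₁*s₂)) + s₃)) * hrep + hs₃
      - ((b:ℝ)^2 + 2*(b:ℝ)*(e:ℝ)*s₂ + (e:ℝ)^2*s₂^2) * hs₁
      - ((c:ℝ)^2 + 2*(c:ℝ)*(e:ℝ)*s₁ + (e:ℝ)^2*(d₁:ℝ)) * hs₂)
  by_cases ha : a = 0
  · have hbc : b*c = 0 := by linear_combination hE/2 - e*ha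
    have hce : c*e = 0 := by
      have h1 : c*e*(d₂:ℚ) = 0 := by linear_combination hB/2 - b*ha
      rcases mul_eq_zero.mp h1 with h | h
      · exact h
      · exact absurd h hd2
    have hbe : b*e = 0 := by
      have h1 : b*e*(d₁:ℚ) = 0 := by linear_combination hC/2 - c*ha
      rcases mul_eq_zero.mp h1 with h | h
      · exact h
      · exact absurd h hd1
    by_cases hee : e = 0
    · exfalso
      rcases mul_eq_zero.mp hbc with hb | hc
      · exact hnot32 0 c (by rw [hrep, ha, hb, hee]; push_cast; ring)
      · exact hnot31 0 b (by rw [hrep, ha, hc, hee]; push_cast; ring)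
    · have hb : b = 0 := by
        rcases mul_eq_zero.mp hbe with h | h
        · exact h
        · exact absurd h hee
      have hc : c = 0 := by
        rcases mul_eq_zero.mp hce with h | h
        · exact h
        · exact absurd h hee
      exact ⟨ha, hb, hc, hee⟩
  · exfalso
    by_cases hb : b = 0
    · have hc : c = 0 := by
        have h1 : a*c = 0 := by linear_combination hC/2 - e*(d₁:ℚ)*hb
        rcases mul_eq_zero.mp h1 with h | h
        · exact absurd h ha
        · exact h
      have he : e = 0 := by
        have h1 : a*e = 0 := by linear_combination hE/2 - c*hb
        rcases mul_eq_zero.mp h1 with h | h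
        · exact absurd h ha
        · exact h
      exact hirr₃ a (by rw [hrep, hb, hc, he]; push_cast; ring)
    · have h1 : b*(a^2 - c^2*(d₂:ℚ)) = 0 := by
        linear_combination (a/2)*hB - (c*(d₂:ℚ)/2)*hE
      have h2 : a^2 = c^2*(d₂:ℚ) := by
        rcases mul_eq_zero.mp h1 with h | h
        · exact absurd h hb
        · linarith
      have hc : c ≠ 0 := by
        intro hc0
        rw [hc0] at h2
        simp at h2
        exact ha h2
      apply hnosq₂ (a/c)
      have hc' : (c:ℝ) ≠ 0 := by exact_mod_cast hc
      push_cast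
      field_simp
      exact_mod_cast h2

lemma aux_alg' (d : ℚ) (s : ℝ) (hs : s^2 = (d:ℝ)) : IsAlgebraic ℚ s := by
  refine ⟨Polynomial.X^2 - Polynomial.C d, Polynomial.X_pow_sub_C_ne_zero (by norm_num) d, ?_⟩
  simp [hs]

lemma aux_exists_auto (L : IntermediateField ℚ ℝ) [IsGalois ℚ L]
    (hdeg : Module.finrank ℚ L = 4)
    (d₁ d₂ : ℚ) (s₁ s₂ : ℝ) (hs₁ : s₁^2 = (d₁:ℝ)) (hs₂ : s₂^2 = (d₂:ℝ))
    (hgen : IntermediateField.adjoin ℚ {s₁, s₂} = L)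
    (h₁L : s₁ ∈ L) (h₂L : s₂ ∈ L) :
    (∃ σ : L ≃ₐ[ℚ] L, σ ⟨s₁,h₁L⟩ = ⟨s₁,h₁L⟩ ∧ σ ⟨s₂,h₂L⟩ = -⟨s₂,h₂L⟩) ∧
    (∃ τ : L ≃ₐ[ℚ] L, τ ⟨s₁,h₁L⟩ = -⟨s₁,h₁L⟩ ∧ τ ⟨s₂,h₂L⟩ = ⟨s₂,h₂L⟩) := by
  classical
  have hfd : FiniteDimensional ℚ L := FiniteDimensional.of_finrank_pos (by omega)
  set e₁ : L := ⟨s₁, h₁L⟩ with he₁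
  set e₂ : L := ⟨s₂, h₂L⟩ with he₂
  have hcast₁ : ((algebraMap ℚ L d₁ : L) : ℝ) = (d₁:ℝ) := by norm_cast
  have hcast₂ : ((algebraMap ℚ L d₂ : L) : ℝ) = (d₂:ℝ) := by norm_cast
  have he₁sq : e₁ * e₁ = algebraMap ℚ L d₁ := by
    apply Subtype.ext; push_cast; rw [hcast₁]; linear_combination hs₁
  have he₂sq : e₂ * e₂ = algebraMap ℚ L d₂ := by
    apply Subtype.ext; push_cast; rw [hcast₂]; linear_combination hs₂
  have hsigns : ∀ σ : L ≃ₐ[ℚ] L, (σ e₁ = e₁ ∨ σ e₁ = -e₁) ∧ (σ e₂ = e₂ ∨ σ e₂ = -e₂) := by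
    intro σ
    constructor
    · exact mul_self_eq_mul_self_iff.mp (by rw [← map_mul, he₁sq, AlgEquiv.commutes])
    · exact mul_self_eq_mul_self_iff.mp (by rw [← map_mul, he₂sq, AlgEquiv.commutes])
  have halg : ∀ x ∈ ({s₁, s₂} : Set ℝ), IsAlgebraic ℚ x := by
    rintro x (rfl | rfl)
    exacts [aux_alg' d₁ _ hs₁, aux_alg' d₂ _ hs₂]
  have htop : L.toSubalgebra = Algebra.adjoin ℚ ({s₁, s₂} : Set ℝ) := by
    rw [← hgen]; exact adjoin_toSubalgebra_of_isAlgebraic halg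
  have hmemL : ∀ z : ℝ, z ∈ Algebra.adjoin ℚ ({s₁, s₂} : Set ℝ) → z ∈ L := by
    intro z hz; rw [← IntermediateField.mem_toSubalgebra, htop]; exact hz
  have hinj : Function.Injective (fun σ : L ≃ₐ[ℚ] L => (σ e₁, σ e₂)) := by
    intro σ τ hfe
    simp only [Prod.mk.injEq] at hfe
    obtain ⟨h1, h2⟩ := hfe
    apply AlgEquiv.ext
    intro x
    have hx : (x:ℝ) ∈ Algebra.adjoin ℚ ({s₁, s₂} : Set ℝ) := by
      rw [← htop]; exact x.2
    have key : ∀ (z : ℝ) (hz : z ∈ Algebra.adjoin ℚ ({s₁, s₂} : Set ℝ)),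
        σ ⟨z, hmemL z hz⟩ = τ ⟨z, hmemL z hz⟩ := by
      intro z hz
      induction hz using Algebra.adjoin_induction with
      | mem y hy =>
        rcases hy with rfl | rfl
        · exact h1
        · exact h2
      | algebraMap r =>
        have hr : (⟨algebraMap ℚ ℝ r, hmemL _ (Subalgebra.algebraMap_mem _ r)⟩ : L)
            = algebraMap ℚ L r := Subtype.ext rfl
        rw [hr, AlgEquiv.commutes, AlgEquiv.commutes]
      | add y z hy hz ihy ihz =>
        have hsum : (⟨y + z, hmemL _ (add_mem hy hz)⟩ : L) = ⟨y, hmemL y hy⟩ + ⟨z, hmemL z hz⟩ :=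
          rfl
        rw [hsum, map_add, map_add, ihy, ihz]
      | mul y z hy hz ihy ihz =>
        have hmul : (⟨y * z, hmemL _ (mul_mem hy hz)⟩ : L) = ⟨y, hmemL y hy⟩ * ⟨z, hmemL z hz⟩ :=
          rfl
        rw [hmul, map_mul, map_mul, ihy, ihz]
    have hx2 := key x.1 hx
    simpa using hx2
  set f : (L ≃ₐ[ℚ] L) → L × L := fun σ => (σ e₁, σ e₂) with hf
  have hcard : Fintype.card (L ≃ₐ[ℚ] L) = 4 := by rw [← Nat.card_eq_fintype_card, IsGalois.card_aut_eq_finrank, hdeg]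
  set T : Finset (L × L) := {(e₁,e₂), (e₁,-e₂), (-e₁,e₂), (-e₁,-e₂)} with hT
  have hsub : Finset.univ.image f ⊆ T := by
    intro p hp
    simp only [Finset.mem_image] at hp
    obtain ⟨σ, _, rfl⟩ := hp
    obtain ⟨ha, hb⟩ := hsigns σ
    simp only [hT, Finset.mem_insert, Finset.mem_singleton, hf, Prod.mk.injEq]
    rcases ha with h1 | h1 <;> rcases hb with h2 | h2 <;> simp [h1, h2]
  have hTcard : T.card ≤ 4 := by
    refine le_trans (Finset.card_insert_le _ _) (Nat.succ_le_succ ?_)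
    refine le_trans (Finset.card_insert_le _ _) (Nat.succ_le_succ ?_)
    refine le_trans (Finset.card_insert_le _ _) (Nat.succ_le_succ ?_)
    simp
  have himgcard : (Finset.univ.image f).card = 4 := by
    rw [Finset.card_image_of_injective _ hinj, Finset.card_univ, hcard]
  have heq : Finset.univ.image f = T := Finset.eq_of_subset_of_card_le hsub (by omega)
  constructor
  · have hmem : (e₁, -e₂) ∈ Finset.univ.image f := by
      rw [heq]; simp [hT]
    simp only [Finset.mem_image] at hmem
    obtain ⟨σ, _, hσ⟩ := hmem
    simp only [hf, Prod.mk.injEq] at hσ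
    exact ⟨σ, hσ.1, hσ.2⟩
  · have hmem : (-e₁, e₂) ∈ Finset.univ.image f := by
      rw [heq]; simp [hT]
    simp only [Finset.mem_image] at hmem
    obtain ⟨σ, _, hσ⟩ := hmem
    simp only [hf, Prod.mk.injEq] at hσ
    exact ⟨σ, hσ.1, hσ.2⟩

lemma aux_mk_eq' (L : IntermediateField ℚ ℝ) (s : ℝ) (hsL : s ∈ L)
    (x : ℝ) (hxL : x ∈ L) (a b : ℚ) (hx : x = a + b * s) :
    (⟨x, hxL⟩ : L) = algebraMap ℚ L a + algebraMap ℚ L b * ⟨s, hsL⟩ := by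
  apply Subtype.ext
  push_cast
  exact hx

lemma aux_negrep' (L : IntermediateField ℚ ℝ) (s : ℝ) (hsL : s ∈ L)
    (σ : L ≃ₐ[ℚ] L) (hσ : σ ⟨s, hsL⟩ = -⟨s, hsL⟩)
    (x : ℝ) (hxL : x ∈ L) (a b : ℚ) (hx : x = a + b * s) :
    σ ⟨x, hxL⟩ = algebraMap ℚ L a - algebraMap ℚ L b * ⟨s, hsL⟩ := by
  rw [aux_mk_eq' L s hsL x hxL a b hx, map_add, map_mul, AlgEquiv.commutes, AlgEquiv.commutes, hσ]
  ring

lemma aux_conj (L K : IntermediateField ℚ ℝ) (hKL : K ≤ L) (d : ℚ) (s : ℝ)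
    (hsK : s ∈ K) (hs : s^2 = (d:ℝ))
    (hrep : ∀ x ∈ K, ∃ a b : ℚ, x = a + b * s)
    (σ : L ≃ₐ[ℚ] L) (hσ : σ ⟨s, hKL hsK⟩ = -⟨s, hKL hsK⟩)
    (u : (𝓞 K)ˣ) :
    ∃ t : L, t^2 = 1 ∧
      σ ⟨(((u : 𝓞 K) : K) : ℝ), hKL ((u : 𝓞 K) : K).2⟩
        = t * (⟨(((u : 𝓞 K) : K) : ℝ), hKL ((u : 𝓞 K) : K).2⟩)⁻¹ := by
  have hcast : ∀ r : ℚ, ((algebraMap ℚ L r : L) : ℝ) = (r:ℝ) := fun r => by norm_cast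
  set x : K := ((u : 𝓞 K) : K) with hxdef
  set y : K := (((u⁻¹ : (𝓞 K)ˣ) : 𝓞 K) : K) with hydef
  have hxy : x * y = 1 := by
    rw [hxdef, hydef]
    norm_cast
    simp
  have hxint : IsIntegral ℤ x := RingOfIntegers.isIntegral_coe _
  have hyint : IsIntegral ℤ y := RingOfIntegers.isIntegral_coe _
  have hxR : IsIntegral ℤ ((x : K) : ℝ) := IntermediateField.coe_isIntegral_iff.mpr hxint
  have hyR : IsIntegral ℤ ((y : K) : ℝ) := IntermediateField.coe_isIntegral_iff.mpr hyint
  set vx : L := ⟨(x : ℝ), hKL x.2⟩ with hvxdef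
  set vy : L := ⟨(y : ℝ), hKL y.2⟩ with hvydef
  have hvxint : IsIntegral ℤ vx := IntermediateField.coe_isIntegral_iff.mp hxR
  have hvyint : IsIntegral ℤ vy := IntermediateField.coe_isIntegral_iff.mp hyR
  have hσvxint : IsIntegral ℤ (σ vx) := hvxint.map (σ.toAlgHom.restrictScalars ℤ)
  have hσvyint : IsIntegral ℤ (σ vy) := hvyint.map (σ.toAlgHom.restrictScalars ℤ)
  obtain ⟨a, b, hab⟩ := hrep ((x : K) : ℝ) x.2
  obtain ⟨c, e, hce⟩ := hrep ((y : K) : ℝ) y.2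
  set es : L := ⟨s, hKL hsK⟩ with hesdef
  have hessq : es^2 = algebraMap ℚ L d := by
    apply Subtype.ext
    push_cast
    rw [hcast d]
    exact hs
  have hmapsub : ∀ p q : ℚ, algebraMap ℚ L (p^2 - q^2*d)
      = (algebraMap ℚ L p)^2 - (algebraMap ℚ L q)^2 * algebraMap ℚ L d := by
    intro p q
    rw [map_sub, map_mul, map_pow, map_pow]
  have ht : σ vx * vx = algebraMap ℚ L (a^2 - b^2*d) := by
    rw [hvxdef, aux_negrep' L s (hKL hsK) σ hσ _ (hKL x.2) a b hab,
      aux_mk_eq' L s (hKL hsK) _ (hKL x.2) a b hab, hmapsub, ← hessq, hesdef]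
    ring
  have ht' : σ vy * vy = algebraMap ℚ L (c^2 - e^2*d) := by
    rw [hvydef, aux_negrep' L s (hKL hsK) σ hσ _ (hKL y.2) c e hce,
      aux_mk_eq' L s (hKL hsK) _ (hKL y.2) c e hce, hmapsub, ← hessq, hesdef]
    ring
  have hvxy : vx * vy = 1 := by
    apply Subtype.ext
    push_cast
    exact congrArg (fun z : K => (z : ℝ)) hxy
  have htt' : (σ vx * vx) * (σ vy * vy) = 1 := by
    have : (σ vx * vx) * (σ vy * vy) = σ (vx * vy) * (vx * vy) := by rw [map_mul]; ring
    rw [this, hvxy, map_one, one_mul]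
  have hqq' : (a^2 - b^2*d) * (c^2 - e^2*d) = 1 := by
    apply (algebraMap ℚ L).injective
    rw [map_mul, map_one, ← ht, ← ht']
    exact htt'
  have hqint : IsIntegral ℤ (a^2 - b^2*d) := by
    have h1 : IsIntegral ℤ (algebraMap ℚ L (a^2 - b^2*d)) := ht ▸ hσvxint.mul hvxint
    exact (isIntegral_algHom_iff ((Algebra.ofId ℚ L).restrictScalars ℤ)
      (algebraMap ℚ L).injective).mp h1
  have hq'int : IsIntegral ℤ (c^2 - e^2*d) := by
    have h1 : IsIntegral ℤ (algebraMap ℚ L (c^2 - e^2*d)) := ht' ▸ hσvyint.mul hvyint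
    exact (isIntegral_algHom_iff ((Algebra.ofId ℚ L).restrictScalars ℤ)
      (algebraMap ℚ L).injective).mp h1
  obtain ⟨n, hn⟩ := IsIntegrallyClosed.isIntegral_iff.mp hqint
  obtain ⟨n', hn'⟩ := IsIntegrallyClosed.isIntegral_iff.mp hq'int
  have hnn' : n * n' = 1 := by
    have : ((n * n' : ℤ) : ℚ) = ((1:ℤ) : ℚ) := by
      push_cast
      rw [(by exact_mod_cast hn : ((n:ℚ)) = a^2 - b^2*d),
        (by exact_mod_cast hn' : ((n':ℚ)) = c^2 - e^2*d)]
      exact hqq'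
    exact_mod_cast this
  have hq2 : (a^2 - b^2*d)^2 = 1 := by
    have hna : ((n:ℚ)) = a^2 - b^2*d := by exact_mod_cast hn
    rcases Int.isUnit_iff.mp (IsUnit.of_mul_eq_one n' hnn') with h1 | h1 <;>
      rw [← hna, h1] <;> norm_num
  refine ⟨σ vx * vx, ?_, ?_⟩
  · rw [ht, ← map_pow, hq2, map_one]
  · have hvx0 : vx ≠ 0 := left_ne_zero_of_mul_eq_one hvxy
    exact ((eq_mul_inv_iff_mul_eq₀ hvx0).mpr rfl)

set_option maxHeartbeats 2000000 in
theorem fundamental_units_multiplicatively_independent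
    (L : IntermediateField ℚ ℝ) (hdeg : Module.finrank ℚ L = 4) [IsGalois ℚ L]
    (hklein : Nonempty ((L ≃ₐ[ℚ] L) ≃* Multiplicative (ZMod 2 × ZMod 2)))
    (d₁ d₂ d₃ : ℤ) (hd₁ : Squarefree d₁) (hd₂ : Squarefree d₂) (hd₃ : Squarefree d₃)
    (K₁ K₂ K₃ : IntermediateField ℚ ℝ)
    (hK₁ : K₁ = IntermediateField.adjoin ℚ {Real.sqrt d₁})
    (hK₂ : K₂ = IntermediateField.adjoin ℚ {Real.sqrt d₂})
    (hK₃ : K₃ = IntermediateField.adjoin ℚ {Real.sqrt d₃})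
    (hK₁L : K₁ ≤ L) (hK₂L : K₂ ≤ L) (hK₃L : K₃ ≤ L)
    (h12 : K₁ ≠ K₂) (h13 : K₁ ≠ K₃) (h23 : K₂ ≠ K₃)
    (hq₁ : Module.finrank ℚ K₁ = 2) (hq₂ : Module.finrank ℚ K₂ = 2)
    (hq₃ : Module.finrank ℚ K₃ = 2)
    (u₁ : (𝓞 K₁)ˣ) (u₂ : (𝓞 K₂)ˣ) (u₃ : (𝓞 K₃)ˣ)
    (hu₁ : (1 : ℝ) < ((u₁ : 𝓞 K₁) : K₁)) (hu₂ : (1 : ℝ) < ((u₂ : 𝓞 K₂) : K₂))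
    (hu₃ : (1 : ℝ) < ((u₃ : 𝓞 K₃) : K₃))
    (hfund₁ : ∀ w : (𝓞 K₁)ˣ, ∃ k : ℤ, w = u₁ ^ k ∨ w = -u₁ ^ k)
    (hfund₂ : ∀ w : (𝓞 K₂)ˣ, ∃ k : ℤ, w = u₂ ^ k ∨ w = -u₂ ^ k)
    (hfund₃ : ∀ w : (𝓞 K₃)ˣ, ∃ k : ℤ, w = u₃ ^ k ∨ w = -u₃ ^ k)
    (m₁ m₂ m₃ : ℤ)
    (h : (((u₁ : 𝓞 K₁) : K₁) : ℝ) ^ m₁ * (((u₂ : 𝓞 K₂) : K₂) : ℝ) ^ m₂ *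
        (((u₃ : 𝓞 K₃) : K₃) : ℝ) ^ m₃ = 1) :
    m₁ = 0 ∧ m₂ = 0 ∧ m₃ = 0 := by
  classical
  -- basic facts about the square roots
  have hirr₁ := aux_irrat d₁ K₁ hK₁ hq₁
  have hirr₂ := aux_irrat d₂ K₂ hK₂ hq₂
  have hirr₃ := aux_irrat d₃ K₃ hK₃ hq₃
  obtain ⟨hs₁, hpos₁⟩ := aux_pos d₁ hd₁ hirr₁
  obtain ⟨hs₂, hpos₂⟩ := aux_pos d₂ hd₂ hirr₂
  obtain ⟨hs₃, hpos₃⟩ := aux_pos d₃ hd₃ hirr₃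
  have hnosq₁ := aux_nosq d₁ hs₁ hirr₁
  have hnosq₂ := aux_nosq d₂ hs₂ hirr₂
  have hs₁' : Real.sqrt d₁ ^ 2 = (((d₁:ℚ)):ℝ) := by rw [hs₁]; norm_cast
  have hs₂' : Real.sqrt d₂ ^ 2 = (((d₂:ℚ)):ℝ) := by rw [hs₂]; norm_cast
  have hs₃' : Real.sqrt d₃ ^ 2 = (((d₃:ℚ)):ℝ) := by rw [hs₃]; norm_cast
  -- memberships
  have hm₁ : Real.sqrt d₁ ∈ K₁ := hK₁ ▸ mem_adjoin_simple_self ℚ _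
  have hm₂ : Real.sqrt d₂ ∈ K₂ := hK₂ ▸ mem_adjoin_simple_self ℚ _
  have hm₃ : Real.sqrt d₃ ∈ K₃ := hK₃ ▸ mem_adjoin_simple_self ℚ _
  have hm₁L : Real.sqrt d₁ ∈ L := hK₁L hm₁
  have hm₂L : Real.sqrt d₂ ∈ L := hK₂L hm₂
  have hm₃L : Real.sqrt d₃ ∈ L := hK₃L hm₃
  -- representation lemmas
  have hrep₁ : ∀ x ∈ K₁, ∃ a b : ℚ, x = a + b * Real.sqrt d₁ := by
    rw [hK₁]; exact aux_rep2 (d₁:ℚ) _ hs₁'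
  have hrep₂ : ∀ x ∈ K₂, ∃ a b : ℚ, x = a + b * Real.sqrt d₂ := by
    rw [hK₂]; exact aux_rep2 (d₂:ℚ) _ hs₂'
  have hrep₃ : ∀ x ∈ K₃, ∃ a b : ℚ, x = a + b * Real.sqrt d₃ := by
    rw [hK₃]; exact aux_rep2 (d₃:ℚ) _ hs₃'
  -- non-membership lemmas
  have hnot21 := aux_notin K₁ K₂ _ _ hK₁ hK₂ hq₁ hq₂ h12
  have hnot31 := aux_notin K₁ K₃ _ _ hK₁ hK₃ hq₁ hq₃ h13
  have hnot32 := aux_notin K₂ K₃ _ _ hK₂ hK₃ hq₂ hq₃ h23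
  have hlin := aux_linind d₁ d₂ _ _ hs₁ hirr₁ hnosq₁ hnot21
  -- the compositum
  have hfd : FiniteDimensional ℚ L := FiniteDimensional.of_finrank_pos (by omega)
  have hsup : K₁ ⊔ K₂ = L := aux_sup L K₁ K₂ hdeg hK₁L hK₂L h12 hq₁ hq₂
  have hgen : IntermediateField.adjoin ℚ {Real.sqrt d₁, Real.sqrt d₂} = L := by
    rw [← Set.singleton_union, IntermediateField.adjoin_union, ← hK₁, ← hK₂, hsup]
  -- sqrt d₃ = e * sqrt d₁ * sqrt d₂
  have hs₃mem : Real.sqrt d₃ ∈ IntermediateField.adjoin ℚ {Real.sqrt d₁, Real.sqrt d₂} := by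
    rw [hgen]; exact hm₃L
  obtain ⟨a, b, c, e, habce⟩ := aux_rep4 (d₁:ℚ) (d₂:ℚ) _ _ hs₁' hs₂' _ hs₃mem
  obtain ⟨ha0, hb0, hc0, he0⟩ := aux_s3 d₁ d₂ d₃ _ _ _ hs₁ hs₂ hs₃ hirr₃ hnosq₁ hnosq₂ hlin
    hnot31 hnot32 a b c e habce
  have hq3rel : Real.sqrt d₃ = (e:ℝ) * (Real.sqrt d₁ * Real.sqrt d₂) := by
    rw [habce, ha0, hb0, hc0]; push_cast; ring
  -- automorphisms
  obtain ⟨⟨σ, hσ1, hσ2⟩, ⟨τ, hτ1, hτ2⟩⟩ :=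
    aux_exists_auto L hdeg (d₁:ℚ) (d₂:ℚ) _ _ hs₁' hs₂' hgen hm₁L hm₂L
  have hcast : ∀ r : ℚ, ((algebraMap ℚ L r : L) : ℝ) = (r:ℝ) := fun r => by norm_cast
  have he₃ : (⟨Real.sqrt d₃, hm₃L⟩ : L)
      = algebraMap ℚ L e * ((⟨Real.sqrt d₁, hm₁L⟩ : L) * ⟨Real.sqrt d₂, hm₂L⟩) := by
    apply Subtype.ext
    push_cast
    rw [hcast e]
    exact hq3rel
  have hσ3 : σ ⟨Real.sqrt d₃, hm₃L⟩ = -⟨Real.sqrt d₃, hm₃L⟩ := by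
    rw [he₃, map_mul, map_mul, AlgEquiv.commutes, hσ1, hσ2]
    ring
  have hτ3 : τ ⟨Real.sqrt d₃, hm₃L⟩ = -⟨Real.sqrt d₃, hm₃L⟩ := by
    rw [he₃, map_mul, map_mul, AlgEquiv.commutes, hτ1, hτ2]
    ring
  -- conjugation data
  obtain ⟨t₂, ht₂sq, ht₂⟩ := aux_conj L K₂ hK₂L (d₂:ℚ) _ hm₂ hs₂' hrep₂ σ hσ2 u₂
  obtain ⟨t₃, ht₃sq, ht₃⟩ := aux_conj L K₃ hK₃L (d₃:ℚ) _ hm₃ hs₃' hrep₃ σ hσ3 u₃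
  obtain ⟨w₁, hw₁sq, hw₁⟩ := aux_conj L K₁ hK₁L (d₁:ℚ) _ hm₁ hs₁' hrep₁ τ hτ1 u₁
  obtain ⟨w₃, hw₃sq, hw₃⟩ := aux_conj L K₃ hK₃L (d₃:ℚ) _ hm₃ hs₃' hrep₃ τ hτ3 u₃
  -- the elements
  set v₁ : L := ⟨(((u₁ : 𝓞 K₁) : K₁) : ℝ), hK₁L ((u₁ : 𝓞 K₁) : K₁).2⟩ with hv₁def
  set v₂ : L := ⟨(((u₂ : 𝓞 K₂) : K₂) : ℝ), hK₂L ((u₂ : 𝓞 K₂) : K₂).2⟩ with hv₂def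
  set v₃ : L := ⟨(((u₃ : 𝓞 K₃) : K₃) : ℝ), hK₃L ((u₃ : 𝓞 K₃) : K₃).2⟩ with hv₃def
  -- fixed elements
  have hfix₁ : σ v₁ = v₁ := by
    obtain ⟨p, q, hpq⟩ := hrep₁ _ ((u₁ : 𝓞 K₁) : K₁).2
    exact aux_fix L _ hm₁L σ hσ1 _ _ p q hpq
  have hfix₂ : τ v₂ = v₂ := by
    obtain ⟨p, q, hpq⟩ := hrep₂ _ ((u₂ : 𝓞 K₂) : K₂).2
    exact aux_fix L _ hm₂L τ hτ2 _ _ p q hpq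
  -- relation in L
  have hcoe : ∀ (w : L) (m : ℤ), ((w^m : L) : ℝ) = (w : ℝ)^m := fun w m =>
    map_zpow₀ (L.val.toRingHom) w m
  have hcoeinv : ∀ w : L, ((w⁻¹ : L) : ℝ) = (w : ℝ)⁻¹ := fun w =>
    map_inv₀ (L.val.toRingHom) w
  have hrel : v₁ ^ m₁ * v₂ ^ m₂ * v₃ ^ m₃ = 1 := by
    apply Subtype.coe_injective
    push_cast [hcoe]
    exact h
  -- real values
  have hr₁ : (1:ℝ) < (v₁ : ℝ) := hu₁
  have hr₂ : (1:ℝ) < (v₂ : ℝ) := hu₂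
  have hr₃ : (1:ℝ) < (v₃ : ℝ) := hu₃
  have hr₁0 : (v₁ : ℝ) ≠ 0 := by linarith
  have hr₂0 : (v₂ : ℝ) ≠ 0 := by linarith
  have hr₃0 : (v₃ : ℝ) ≠ 0 := by linarith
  -- |T^m| = 1 for T² = 1
  have habs : ∀ (T : ℝ), T^2 = 1 → ∀ m : ℤ, |T ^ m| = 1 := by
    intro T hT m
    have hT' : T * T = 1 * 1 := by linear_combination hT
    rcases mul_self_eq_mul_self_iff.mp hT' with h1 | h1
    · rw [h1]; simp
    · rw [h1]
      rcases Int.even_or_odd m with hm | hm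
      · rw [hm.neg_one_zpow]; simp
      · rw [hm.neg_one_zpow]; simp
  -- generic step : from an automorphism ρ fixing vᵢ and conjugating the other two, mᵢ = 0
  have step : ∀ (ρ : L ≃ₐ[ℚ] L) (vi vj vk : L) (mi mj mk : ℤ) (ti tk : L),
      vi ^ mi * vj ^ mj * vk ^ mk = 1 → ρ vi = vi → ρ vj = ti * vj⁻¹ → ρ vk = tk * vk⁻¹ →
      ti^2 = 1 → tk^2 = 1 → (1:ℝ) < (vi:ℝ) → (vj:ℝ) ≠ 0 → (vk:ℝ) ≠ 0 →
      mi = 0 := by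
    intro ρ vi vj vk mi mj mk ti tk hrel hfix hconj1 hconj2 hti htk hvi hvj hvk
    have hσrel := congrArg ρ hrel
    rw [map_one, map_mul, map_mul, map_zpow₀, map_zpow₀, map_zpow₀, hfix, hconj1, hconj2]
      at hσrel
    -- coerce to ℝ
    have R2 : ((vi:ℝ))^mi * (((ti:ℝ)) * ((vj:ℝ))⁻¹)^mj * (((tk:ℝ)) * ((vk:ℝ))⁻¹)^mk = 1 := by
      have hc := congrArg (fun z : L => (z:ℝ)) hσrel
      push_cast [hcoe, hcoeinv] at hc
      exact hc
    have R1 : ((vi:ℝ))^mi * ((vj:ℝ))^mj * ((vk:ℝ))^mk = 1 := by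
      have hc := congrArg (fun z : L => (z:ℝ)) hrel
      push_cast [hcoe] at hc
      exact hc
    have hti' : ((ti:ℝ))^2 = 1 := by
      have hc := congrArg (fun z : L => (z:ℝ)) hti
      push_cast [hcoe] at hc
      exact_mod_cast hc
    have htk' : ((tk:ℝ))^2 = 1 := by
      have hc := congrArg (fun z : L => (z:ℝ)) htk
      push_cast [hcoe] at hc
      exact_mod_cast hc
    have hprod : ((vi:ℝ))^(2*mi) * (((ti:ℝ))^mj * ((tk:ℝ))^mk) = 1 := by
      have hexp : ((vi:ℝ))^(2*mi) * (((ti:ℝ))^mj * ((tk:ℝ))^mk)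
          = (((vi:ℝ))^mi * ((vj:ℝ))^mj * ((vk:ℝ))^mk)
            * (((vi:ℝ))^mi * (((ti:ℝ)) * ((vj:ℝ))⁻¹)^mj * (((tk:ℝ)) * ((vk:ℝ))⁻¹)^mk) := by
        rw [mul_zpow, mul_zpow, inv_zpow, inv_zpow, two_mul, zpow_add₀ (by positivity : (vi:ℝ) ≠ 0)]
        field_simp
      rw [hexp, R1, R2, one_mul]
    have habs1 : |((vi:ℝ))^(2*mi)| = 1 := by
      have := congrArg abs hprod
      rw [abs_mul, abs_mul, habs _ hti' mj, habs _ htk' mk, abs_one] at this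
      simpa using this
    have hvipos : (0:ℝ) < (vi:ℝ) := by linarith
    have hfin : ((vi:ℝ))^(2*mi) = 1 := by
      rwa [abs_of_pos (by positivity)] at habs1
    have := zpow_right_injective₀ hvipos (by linarith : (vi:ℝ) ≠ 1) (by
      rw [hfin]; norm_num : (vi:ℝ)^(2*mi) = (vi:ℝ)^(0:ℤ))
    omega
  have hm₁0 : m₁ = 0 := step σ v₁ v₂ v₃ m₁ m₂ m₃ t₂ t₃ hrel hfix₁ ht₂ ht₃ ht₂sq ht₃sq hr₁ hr₂0 hr₃0
  have hm₂0 : m₂ = 0 := by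
    have hrel' : v₂ ^ m₂ * v₁ ^ m₁ * v₃ ^ m₃ = 1 := by rw [← hrel]; ring
    exact step τ v₂ v₁ v₃ m₂ m₁ m₃ w₁ w₃ hrel' hfix₂ hw₁ hw₃ hw₁sq hw₃sq hr₂ hr₁0 hr₃0
  have hm₃0 : m₃ = 0 := by
    rw [hm₁0, hm₂0] at hrel
    simp only [zpow_zero, one_mul] at hrel
    have hc := congrArg (fun z : L => (z:ℝ)) hrel
    push_cast [hcoe] at hc
    have h0 : (v₃:ℝ)^m₃ = (v₃:ℝ)^(0:ℤ) := by rw [hc]; norm_num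
    have := zpow_right_injective₀ (by linarith : (0:ℝ) < (v₃:ℝ)) (by linarith : (v₃:ℝ) ≠ 1) h0
    omega
  exact ⟨hm₁0, hm₂0, hm₃0⟩
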